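/- Uniqueness of the Fourier-invariant combination: for a ∈ ℝ, the operator L + aM on Schwartz functions (L the Legendre operator, M multiplication by 1-|x|²) commutes with the Fourier transform if and only if a = 1. -/

import Mathlib

open MeasureTheory Filter Topology
noncomputable section

/-- Euclidean space ℝ^d. -/
abbrev Ed (d : ℕ) := EuclideanSpace ℝ (Fin d)

/-- Partial derivative ∂ᵢ of a complex-valued function. -/
def pd {d : ℕ} (i : Fin d) (f : Ed d → ℂ) (x : Ed d) : ℂ :=
  fderiv ℝ f x (EuclideanSpace.single i 1)

/-- Laplacian Δ = ∑ᵢ ∂ᵢ². -/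
def lap {d : ℕ} (f : Ed d → ℂ) (x : Ed d) : ℂ := ∑ i, pd i (pd i f) x

/-- Radial derivative r∂ᵣ = ∑ᵢ xᵢ ∂ᵢ. -/
def rdr {d : ℕ} (f : Ed d → ℂ) (x : Ed d) : ℂ := ∑ i, (x i : ℂ) * pd i f x

/-- Legendre operator L f = ∇·((1-|x|²)∇f). -/
def legendreOp {d : ℕ} (f : Ed d → ℂ) (x : Ed d) : ℂ :=
  ∑ i, pd i (fun y => ((1 - ‖y‖ ^ 2 : ℝ) : ℂ) * pd i f y) x

/-- Prolate operator W f = L f - |x|² f. -/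
def prolateOp {d : ℕ} (f : Ed d → ℂ) (x : Ed d) : ℂ :=
  legendreOp f x - ((‖x‖ ^ 2 : ℝ) : ℂ) * f x

/-- The Fourier transform ℱf(p) = (2π)^{-d/2} ∫ e^{-i x·p} f(x) dx. -/
def FT {d : ℕ} (f : Ed d → ℂ) (p : Ed d) : ℂ :=
  (((2 * Real.pi) ^ (-(d : ℝ) / 2) : ℝ) : ℂ) *
    ∫ x : Ed d, Complex.exp (-Complex.I * ((inner ℝ x p : ℝ) : ℂ)) * f x

namespace FCaux
open SchwartzMap Real Complex FourierTransform

variable {d : ℕ}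

def P (i : Fin d) : 𝓢(Ed d, ℂ) →L[ℂ] 𝓢(Ed d, ℂ) :=
  LineDeriv.lineDerivOpCLM ℂ 𝓢(Ed d, ℂ) (EuclideanSpace.single i 1 : Ed d)

def X (i : Fin d) : 𝓢(Ed d, ℂ) →L[ℝ] 𝓢(Ed d, ℂ) :=
  SchwartzMap.bilinLeftCLM (ContinuousLinearMap.mul ℝ ℂ)
    ((Complex.ofRealCLM.comp (EuclideanSpace.proj i)).hasTemperateGrowth)

lemma P_apply (i : Fin d) (f : 𝓢(Ed d, ℂ)) (x : Ed d) : P i f x = pd i (⇑f) x := rfl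

lemma X_apply (i : Fin d) (f : 𝓢(Ed d, ℂ)) (x : Ed d) : X i f x = (x i : ℂ) * f x :=
  mul_comm _ _

def c0 : ℝ := (2 * Real.pi)⁻¹

lemma c0_ne : (c0 : ℝ) ≠ 0 := by
  simp [c0, Real.pi_ne_zero]

def σd (d : ℕ) : Ed d ≃L[ℝ] Ed d :=
  (LinearEquiv.smulOfNeZero ℝ (Ed d) c0 c0_ne).toContinuousLinearEquiv

lemma σd_apply (p : Ed d) : σd d p = c0 • p := rfl

def Cc (d : ℕ) : ℂ := (((2 * Real.pi) ^ (-(d : ℝ) / 2) : ℝ) : ℂ)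

lemma Cc_ne : Cc d ≠ 0 := by
  simp only [Cc, ne_eq, Complex.ofReal_eq_zero]
  positivity

set_option synthInstance.maxHeartbeats 1000000 in
def FTS : 𝓢(Ed d, ℂ) →L[ℂ] 𝓢(Ed d, ℂ) :=
  Cc d • (((SchwartzMap.compCLMOfContinuousLinearEquiv ℂ (σd d) :
      𝓢(Ed d, ℂ) →L[ℂ] 𝓢(Ed d, ℂ))).comp
    (SchwartzMap.fourierTransformCLM ℂ : 𝓢(Ed d, ℂ) →L[ℂ] 𝓢(Ed d, ℂ)))

lemma FTS_apply (f : 𝓢(Ed d, ℂ)) (p : Ed d) :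
    FTS f p = Cc d * 𝓕 (⇑f) (c0 • p) := by
  simp only [FTS, ContinuousLinearMap.smul_apply, ContinuousLinearMap.comp_apply,
    SchwartzMap.smul_apply, SchwartzMap.compCLMOfContinuousLinearEquiv_apply,
    Function.comp_apply, SchwartzMap.fourierTransformCLM_apply, smul_eq_mul]
  rfl

lemma FT_eq (f : 𝓢(Ed d, ℂ)) : FT (⇑f) = ⇑(FTS f) := by
  funext p
  rw [FTS_apply, Real.fourier_eq']
  unfold FT Cc
  congr 1
  apply integral_congr_ae
  filter_upwards with x
  rw [smul_eq_mul]
  congr 1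
  rw [real_inner_smul_right]
  have : (-2 * π * (c0 * inner ℝ x p) : ℝ) = -(inner ℝ x p : ℝ) := by
    have h2 : (2 * π) * c0 = 1 := by rw [c0, mul_inv_cancel₀ (by positivity : (2 * π : ℝ) ≠ 0)]
    linear_combination (-(inner ℝ x p)) * h2
  rw [this]
  push_cast
  ring

lemma fderiv_coe (f : 𝓢(Ed d, ℂ)) :
    fderiv ℝ (⇑f) = ⇑(SchwartzMap.fderivCLM ℝ (Ed d) ℂ f) := by
  funext x; exact (SchwartzMap.fderivCLM_apply ℝ f x).symm

lemma hnorm (f : 𝓢(Ed d, ℂ)) : Integrable (fun v : Ed d => ‖v‖ * ‖f v‖) := by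
  simpa using f.integrable_pow_mul (volume) 1

lemma integrable_fderiv (f : 𝓢(Ed d, ℂ)) : Integrable (fderiv ℝ (⇑f)) := by
  rw [fderiv_coe]; exact (SchwartzMap.fderivCLM ℝ (Ed d) ℂ f).integrable

lemma integrable_fsr (f : 𝓢(Ed d, ℂ)) :
    Integrable (VectorFourier.fourierSMulRight (innerSL ℝ) (⇑f)) := by
  refine Integrable.mono' (((hnorm f).const_mul (2 * π * ‖(innerSL ℝ (E := Ed d))‖))) ?_ ?_
  · exact f.continuous.aestronglyMeasurable.fourierSMulRight
  · filter_upwards with v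
    simpa [mul_assoc] using VectorFourier.norm_fourierSMulRight_le (innerSL ℝ) (⇑f) v

lemma fourier_smul (c : ℂ) (g : Ed d → ℂ) (ξ : Ed d) :
    𝓕 (fun v => c * g v) ξ = c * 𝓕 g ξ := by
  rw [Real.fourier_eq, Real.fourier_eq, ← integral_const_mul]
  congr 1; funext v
  simp only [Circle.smul_def, smul_eq_mul]
  ring

lemma two_pi_c0 : (2 * π) * c0 = 1 := by
  rw [c0, mul_inv_cancel₀ (by positivity : (2 * π : ℝ) ≠ 0)]

lemma FTS_P (i : Fin d) (f : 𝓢(Ed d, ℂ)) :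
    FTS (P i f) = Complex.I • X i (FTS f) := by
  ext p
  rw [SchwartzMap.smul_apply, X_apply, FTS_apply, FTS_apply]
  have h1 : ⇑(P i f) = fun x => fderiv ℝ (⇑f) x (EuclideanSpace.single i 1) := rfl
  rw [h1, ← Real.fourier_continuousLinearMap_apply (integrable_fderiv f),
    Real.fourier_fderiv f.integrable f.differentiable (integrable_fderiv f)]
  simp only [VectorFourier.fourierSMulRight_apply, ContinuousLinearMap.neg_apply,
    innerSL_apply_apply, smul_eq_mul]
  have hip : (((innerSL ℝ) (c0 • p)) (EuclideanSpace.single i 1) : ℝ) = c0 * p i := by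
    change (inner ℝ (c0 • p) (EuclideanSpace.single i 1) : ℝ) = _
    rw [real_inner_smul_left, EuclideanSpace.inner_single_right]
    simp [mul_comm]
  rw [hip, Complex.real_smul]
  have hc : (c0 : ℂ) * (2 * (π : ℂ)) = 1 := by
    norm_cast
    rw [mul_comm]; exact two_pi_c0
  push_cast
  linear_combination (Complex.I * (p i : ℂ) * Cc d * 𝓕 (⇑f) (c0 • p)) * hc

lemma FTS_X (i : Fin d) (f : 𝓢(Ed d, ℂ)) :
    FTS (X i f) = Complex.I • P i (FTS f) := by
  ext p
  rw [SchwartzMap.smul_apply, P_apply]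
  set D := 𝓕 (VectorFourier.fourierSMulRight (innerSL ℝ) (⇑f)) (c0 • p) with hD
  have hF := Real.hasFDerivAt_fourier f.integrable (hnorm f) (c0 • p)
  have hσ : HasFDerivAt (fun q : Ed d => c0 • q)
      (c0 • ContinuousLinearMap.id ℝ (Ed d)) p := by
    exact (c0 • ContinuousLinearMap.id ℝ (Ed d)).hasFDerivAt (x := p)
  have hcomp : HasFDerivAt (fun q : Ed d => Cc d * 𝓕 (⇑f) (c0 • q))
      (Cc d • (D.comp (c0 • ContinuousLinearMap.id ℝ (Ed d)))) p :=
    (hF.comp p hσ).const_mul (Cc d)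
  have hcoe : ⇑(FTS f) = fun q : Ed d => Cc d * 𝓕 (⇑f) (c0 • q) := by
    funext q; exact FTS_apply f q
  have hfd : pd i (⇑(FTS f)) p =
      Cc d * (c0 * D (EuclideanSpace.single i 1)) := by
    unfold pd
    rw [hcoe, hcomp.fderiv]
    simp [smul_smul]
  have hDval : D (EuclideanSpace.single i 1) =
      (-(2 * (π : ℂ) * Complex.I)) * 𝓕 (⇑(X i f)) (c0 • p) := by
    rw [hD, Real.fourier_continuousLinearMap_apply (integrable_fsr f)]
    rw [← fourier_smul (-(2 * (π : ℂ) * Complex.I)) (⇑(X i f)) (c0 • p)]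
    refine congrArg (fun g : Ed d → ℂ => 𝓕 g (c0 • p)) ?_
    funext v
    have hX : X i f v = (v i : ℂ) * f v := X_apply i f v
    simp only [VectorFourier.fourierSMulRight_apply, innerSL_apply_apply, hX,
      EuclideanSpace.inner_single_right, RCLike.inner_apply, conj_trivial, one_mul,
      Complex.real_smul, smul_eq_mul]
    have h2 : (((innerSL ℝ) v) (EuclideanSpace.single i 1) : ℝ) = v i := by
      change (inner ℝ v (EuclideanSpace.single i 1) : ℝ) = _
      rw [EuclideanSpace.inner_single_right]; simp
    rw [h2]
  rw [hfd, hDval, FTS_apply]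
  have hc : (c0 : ℂ) * (2 * (π : ℂ)) = 1 := by
    norm_cast
    rw [mul_comm]; exact two_pi_c0
  have hI := Complex.I_mul_I
  simp only [smul_eq_mul]
  linear_combination (-(Cc d * 𝓕 (⇑(X i f)) (c0 • p))) * hc +
    (Cc d * 𝓕 (⇑(X i f)) (c0 • p) * ((c0 : ℂ) * 2 * (π : ℂ))) * hI

lemma X_smul (j : Fin d) (c : ℂ) (h : 𝓢(Ed d, ℂ)) : X j (c • h) = c • X j h := by
  ext x
  simp only [X_apply, SchwartzMap.smul_apply, smul_eq_mul]
  ring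

lemma PX (i j : Fin d) (h : 𝓢(Ed d, ℂ)) :
    P i (X j h) = X j (P i h) + (if i = j then h else 0) := by
  ext x
  set c : Ed d →L[ℝ] ℂ := Complex.ofRealCLM.comp (EuclideanSpace.proj j) with hcdef
  have hc : ⇑(X j h) = fun y => h y * c y := rfl
  rw [SchwartzMap.add_apply, P_apply]
  unfold pd
  rw [hc, fderiv_fun_mul h.differentiableAt (c.differentiableAt)]
  rw [ContinuousLinearMap.add_apply, ContinuousLinearMap.smul_apply,
    ContinuousLinearMap.smul_apply, c.fderiv]
  have hce : c (EuclideanSpace.single i 1) = if i = j then 1 else 0 := by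
    simp only [hcdef, ContinuousLinearMap.comp_apply, Complex.ofRealCLM_apply]
    rw [show ((EuclideanSpace.proj j) (EuclideanSpace.single i (1:ℝ))) =
      (EuclideanSpace.single i (1:ℝ)) j from rfl, EuclideanSpace.single_apply]
    split_ifs with h1 h2 h3 h4
    · norm_num
    · exact absurd h1.symm h2
    · exact absurd h3.symm h1
    · norm_num
  have hite : (if i = j then h else (0 : 𝓢(Ed d, ℂ))) x = if i = j then h x else 0 := by
    split_ifs <;> simp
  rw [hce, hite, X_apply]
  have hcx : c x = (x j : ℂ) := rfl
  rw [hcx, P_apply]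
  unfold pd
  simp only [smul_eq_mul]
  split_ifs <;> ring

lemma coe_sum {ι : Type*} (s : Finset ι) (g : ι → 𝓢(Ed d, ℂ)) (x : Ed d) :
    (∑ i ∈ s, g i) x = ∑ i ∈ s, g i x := by
  have h := map_sum (FunLike.coeAddMonoidHom 𝓢(Ed d, ℂ) (Ed d) ℂ) g s
  calc (∑ i ∈ s, g i) x = (FunLike.coeAddMonoidHom 𝓢(Ed d, ℂ) (Ed d) ℂ (∑ i ∈ s, g i)) x := rfl
    _ = (∑ i ∈ s, (FunLike.coeAddMonoidHom 𝓢(Ed d, ℂ) (Ed d) ℂ) (g i)) x := by rw [h]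
    _ = ∑ i ∈ s, g i x := by rw [Finset.sum_apply]; rfl

lemma norm_sq_eq (y : Ed d) : ‖y‖ ^ 2 = ∑ j, (y j) ^ 2 := by
  rw [EuclideanSpace.norm_eq, Real.sq_sqrt (by positivity)]
  exact Finset.sum_congr rfl fun j _ => by rw [Real.norm_eq_abs, _root_.sq_abs]

lemma mulM (h : 𝓢(Ed d, ℂ)) :
    (fun x : Ed d => ((1 - ‖x‖ ^ 2 : ℝ) : ℂ) * h x) = ⇑(h - ∑ j, X j (X j h)) := by
  funext x
  rw [SchwartzMap.sub_apply, coe_sum]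
  have : ((1 - ‖x‖ ^ 2 : ℝ) : ℂ) = 1 - ∑ j, ((x j : ℂ)) ^ 2 := by
    rw [norm_sq_eq]; push_cast; ring
  rw [this, sub_mul, one_mul, Finset.sum_mul]
  congr 1
  exact Finset.sum_congr rfl fun j _ => by rw [X_apply, X_apply]; ring

def Q (i : Fin d) (h : 𝓢(Ed d, ℂ)) : 𝓢(Ed d, ℂ) :=
  P i h - ∑ j, X j (X j (P i h))

def Top (a : ℝ) (h : 𝓢(Ed d, ℂ)) : 𝓢(Ed d, ℂ) :=
  (∑ i, P i (Q i h)) + (a : ℂ) • (h - ∑ j, X j (X j h))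

lemma pd_coe (i : Fin d) (h : 𝓢(Ed d, ℂ)) : pd i (⇑h) = ⇑(P i h) := rfl

lemma top_eq (a : ℝ) (h : 𝓢(Ed d, ℂ)) :
    (fun x => legendreOp (⇑h) x + (a : ℂ) * ((1 - ‖x‖ ^ 2 : ℝ) : ℂ) * h x) = ⇑(Top a h) := by
  funext x
  rw [Top, SchwartzMap.add_apply, SchwartzMap.smul_apply, ← mulM h, coe_sum]
  have hleg : legendreOp (⇑h) x = ∑ i, (P i (Q i h)) x := by
    unfold legendreOp
    refine Finset.sum_congr rfl fun i _ => ?_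
    have hin : (fun y => ((1 - ‖y‖ ^ 2 : ℝ) : ℂ) * pd i (⇑h) y) = ⇑(Q i h) := by
      rw [pd_coe, Q]
      exact mulM (P i h)
    rw [hin, pd_coe]
  rw [hleg]
  simp only [smul_eq_mul]
  ring

lemma hXXf (j : Fin d) (h : 𝓢(Ed d, ℂ)) :
    FTS (X j (X j h)) = -(P j (P j (FTS h))) := by
  rw [FTS_X j (X j h), FTS_X j h, _root_.map_smul, smul_smul, Complex.I_mul_I, neg_one_smul]

lemma hQ (f : 𝓢(Ed d, ℂ)) (i : Fin d) :
    FTS (Q i f) = Complex.I • X i (FTS f) + ∑ j, Complex.I • P j (P j (X i (FTS f))) := by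
  rw [Q, map_sub, map_sum, FTS_P]
  have h1 : ∀ j : Fin d, FTS (X j (X j (P i f))) =
      -(Complex.I • P j (P j (X i (FTS f)))) := by
    intro j
    rw [hXXf, FTS_P, _root_.map_smul, _root_.map_smul]
  rw [Finset.sum_congr rfl (fun j _ => h1 j)]
  rw [Finset.sum_neg_distrib, sub_neg_eq_add]

lemma hPQ (f : 𝓢(Ed d, ℂ)) (i : Fin d) :
    FTS (P i (Q i f)) =
      -(X i (X i (FTS f))) - ∑ j, X i (P j (P j (X i (FTS f)))) := by
  rw [FTS_P, hQ, map_add (X i), X_smul, map_sum (X i)]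
  have h1 : ∀ j : Fin d, X i (Complex.I • P j (P j (X i (FTS f)))) =
      Complex.I • X i (P j (P j (X i (FTS f)))) := fun j => X_smul _ _ _
  rw [Finset.sum_congr rfl (fun j _ => h1 j), smul_add, smul_smul, Complex.I_mul_I,
    neg_one_smul, ← Finset.smul_sum, smul_smul, Complex.I_mul_I, neg_one_smul]
  abel

lemma n1 (g : 𝓢(Ed d, ℂ)) (i j : Fin d) :
    X i (P j (P j (X i g))) =
      X i (X i (P j (P j g))) + (if j = i then X i (P j g) + X i (P j g) else 0) := by
  have h1 := PX j i g
  have h2 := PX j i (P j g)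
  rw [h1, map_add (P j), h2]
  have h3 : P j (if j = i then g else 0) = if j = i then P j g else 0 := by
    split_ifs <;> simp
  rw [h3]
  split_ifs <;> simp only [map_add, map_zero, add_zero] <;> abel

lemma n2 (g : 𝓢(Ed d, ℂ)) (i j : Fin d) :
    P i (X j (X j (P i g))) =
      X j (X j (P i (P i g))) + (if i = j then X j (P i g) + X j (P i g) else 0) := by
  have h1 := PX i j (X j (P i g))
  have h2 := PX i j (P i g)
  rw [h1, h2, map_add (X j)]
  split_ifs
  · abel
  · simp only [map_zero, add_zero]

lemma key (a : ℝ) (f : 𝓢(Ed d, ℂ)) :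
    FTS (Top a f) = Top a (FTS f) +
      ((a : ℂ) - 1) • ((∑ j, P j (P j (FTS f))) + ∑ i, X i (X i (FTS f))) := by
  set g := FTS f with hg
  set PP : 𝓢(Ed d, ℂ) := ∑ j, P j (P j g) with hPP
  set XXs : 𝓢(Ed d, ℂ) := ∑ i, X i (X i g) with hXXs
  set R : 𝓢(Ed d, ℂ) := ∑ i, (X i (P i g) + X i (P i g)) with hR
  set A : 𝓢(Ed d, ℂ) := ∑ i, ∑ j, X i (X i (P j (P j g))) with hA
  set B : 𝓢(Ed d, ℂ) := ∑ i, ∑ j, X j (X j (P i (P i g))) with hB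
  have hAB : A = B := by
    rw [hA, hB]
    exact Finset.sum_comm
  have E1 : FTS (Top a f) = (-XXs - A - R) + (a : ℂ) • (g + PP) := by
    rw [Top, map_add, map_sum, _root_.map_smul, map_sub, map_sum]
    have e1 : ∀ i : Fin d, FTS (P i (Q i f)) =
        -(X i (X i g)) - (∑ j, X i (X i (P j (P j g))) + (X i (P i g) + X i (P i g))) := by
      intro i
      rw [hPQ]
      congr 1
      rw [Finset.sum_congr rfl (fun j _ => n1 g i j), Finset.sum_add_distrib,
        Finset.sum_ite_eq' Finset.univ i fun j => X i (P j g) + X i (P j g)]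
      simp
    rw [Finset.sum_congr rfl (fun i _ => e1 i),
      Finset.sum_congr rfl (fun j (_ : j ∈ Finset.univ) => hXXf j f)]
    rw [Finset.sum_sub_distrib, Finset.sum_add_distrib, Finset.sum_neg_distrib, ← hg,
      ← hXXs, ← hA, ← hR]
    rw [show (∑ j, -(P j (P j g))) = -PP by rw [hPP, Finset.sum_neg_distrib], sub_neg_eq_add]
    abel
  have E2 : Top a g = (PP - B - R) + (a : ℂ) • (g - XXs) := by
    rw [Top]
    have e2 : ∀ i : Fin d, P i (Q i g) =
        P i (P i g) - (∑ j, X j (X j (P i (P i g))) + (X i (P i g) + X i (P i g))) := by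
      intro i
      rw [Q, map_sub (P i), map_sum (P i)]
      congr 1
      rw [Finset.sum_congr rfl (fun j _ => n2 g i j), Finset.sum_add_distrib,
        Finset.sum_ite_eq Finset.univ i fun j => X j (P i g) + X j (P i g)]
      simp
    rw [Finset.sum_congr rfl (fun i _ => e2 i), Finset.sum_sub_distrib,
      Finset.sum_add_distrib, ← hPP, ← hB, ← hR, ← hXXs]
    abel
  rw [E1, E2, hAB]
  module

lemma FTS_surj (g : 𝓢(Ed d, ℂ)) : ∃ f : 𝓢(Ed d, ℂ), FTS f = g := by
  refine ⟨(FourierTransform.fourierCLE ℂ 𝓢(Ed d, ℂ)).symm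
    ((SchwartzMap.compCLMOfContinuousLinearEquiv ℂ (σd d).symm) ((Cc d)⁻¹ • g)), ?_⟩
  ext p
  rw [FTS_apply]
  have h1 : 𝓕 ⇑((FourierTransform.fourierCLE ℂ 𝓢(Ed d, ℂ)).symm
      ((SchwartzMap.compCLMOfContinuousLinearEquiv ℂ (σd d).symm) ((Cc d)⁻¹ • g)))
      = ⇑((SchwartzMap.compCLMOfContinuousLinearEquiv ℂ (σd d).symm) ((Cc d)⁻¹ • g)) := by
    rw [← SchwartzMap.fourier_coe]
    exact congrArg (fun F : 𝓢(Ed d, ℂ) => (⇑F : Ed d → ℂ)) ((FourierTransform.fourierCLE ℂ 𝓢(Ed d, ℂ)).apply_symm_apply _)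
  rw [h1, SchwartzMap.compCLMOfContinuousLinearEquiv_apply]
  have h2 : (σd d).symm (c0 • p) = p := by
    have : (c0 • p) = σd d p := rfl
    rw [this, ContinuousLinearEquiv.symm_apply_apply]
  simp only [Function.comp_apply, h2, SchwartzMap.smul_apply, smul_eq_mul]
  rw [← mul_assoc, mul_inv_cancel₀ Cc_ne, one_mul]

def ofCompactSupport (f : Ed d → ℂ) (hsm : ContDiff ℝ (⊤ : ℕ∞) f) (hsupp : HasCompactSupport f) :
    𝓢(Ed d, ℂ) where
  toFun := f
  smooth' := hsm
  decay' := by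
    intro k n
    have h2 : HasCompactSupport (fun x => ‖iteratedFDeriv ℝ n f x‖) :=
      (hsupp.iteratedFDeriv n).comp_left (g := norm) norm_zero
    have h3 : HasCompactSupport (fun x : Ed d => ‖x‖ ^ k * ‖iteratedFDeriv ℝ n f x‖) := by
      apply h2.mul_left
    have hcont : Continuous (fun x : Ed d => ‖x‖ ^ k * ‖iteratedFDeriv ℝ n f x‖) :=
      (continuous_norm.pow k).mul (hsm.continuous_iteratedFDeriv (mod_cast le_top)).norm
    obtain ⟨C, hC⟩ := hcont.bounded_above_of_compact_support h3
    refine ⟨C, fun x => ?_⟩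
    have h5 := hC x
    rw [Real.norm_eq_abs] at h5
    exact (le_abs_self _).trans h5

lemma exists_bump (hd : 1 ≤ d) :
    ∃ (g : 𝓢(Ed d, ℂ)) (p : Ed d), (∀ i : Fin d, pd i (pd i (⇑g)) p = 0) ∧ g p = 1 ∧ p ≠ 0 := by
  set φ : ContDiffBump (0 : Ed d) := ⟨1, 2, one_pos, one_lt_two⟩ with hφdef
  set g0 : Ed d → ℂ := fun x => ((φ x : ℝ) : ℂ) with hg0
  have hφc : ContDiff ℝ (⊤ : ℕ∞) (⇑φ) := φ.contDiff
  have hsm : ContDiff ℝ (⊤ : ℕ∞) g0 := Complex.ofRealCLM.contDiff.comp hφc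
  have hsupp : HasCompactSupport g0 :=
    φ.hasCompactSupport.comp_left (g := fun r : ℝ => (r : ℂ)) (by simp)
  set g : 𝓢(Ed d, ℂ) := ofCompactSupport g0 hsm hsupp with hgdef
  set i0 : Fin d := ⟨0, hd⟩ with hi0
  set p : Ed d := EuclideanSpace.single i0 (1/2 : ℝ) with hp
  have hpnorm : ‖p‖ = 1/2 := by
    rw [hp, EuclideanSpace.norm_single]
    norm_num
  have hball : ∀ y ∈ Metric.ball (0 : Ed d) 1, g y = 1 := by
    intro y hy
    have hmem : y ∈ Metric.closedBall (0 : Ed d) φ.rIn := by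
      show dist y 0 ≤ φ.rIn
      rw [hφdef]
      exact le_of_lt (Metric.mem_ball.mp hy)
    have : φ y = 1 := φ.one_of_mem_closedBall hmem
    show g0 y = 1
    rw [hg0]; simp [this]
  have hpmem : p ∈ Metric.ball (0 : Ed d) 1 := by
    rw [Metric.mem_ball, dist_zero_right, hpnorm]
    norm_num
  have hopen : IsOpen (Metric.ball (0 : Ed d) 1) := Metric.isOpen_ball
  have hev : ∀ y ∈ Metric.ball (0 : Ed d) 1, ∀ i : Fin d, pd i (⇑g) y = 0 := by
    intro y hy i
    have heq : ⇑g =ᶠ[nhds y] (fun _ => (1 : ℂ)) :=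
      Filter.eventuallyEq_of_mem (hopen.mem_nhds hy) hball
    unfold pd
    rw [Filter.EventuallyEq.fderiv_eq heq, fderiv_fun_const]
    simp
  refine ⟨g, p, ?_, hball p hpmem, ?_⟩
  · intro i
    have heq2 : pd i (⇑g) =ᶠ[nhds p] (fun _ => (0 : ℂ)) :=
      Filter.eventuallyEq_of_mem (hopen.mem_nhds hpmem) (fun y hy => hev y hy i)
    show fderiv ℝ (pd i (⇑g)) p (EuclideanSpace.single i 1) = 0
    rw [Filter.EventuallyEq.fderiv_eq heq2, fderiv_fun_const]
    simp
  · intro hcon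
    have : p i0 = 0 := by rw [hcon]; rfl
    rw [hp, EuclideanSpace.single_apply] at this
    simp at this

end FCaux

open FCaux in
/-- L + aM commutes with the Fourier transform iff a = 1. -/
theorem fourier_commute_iff (d : ℕ) (hd : 1 ≤ d) (a : ℝ) :
    (∀ f : SchwartzMap (Ed d) ℂ, ∀ p : Ed d,
        FT (fun x => legendreOp (⇑f) x + (a : ℂ) * ((1 - ‖x‖ ^ 2 : ℝ) : ℂ) * f x) p =
          legendreOp (FT (⇑f)) p + (a : ℂ) * ((1 - ‖p‖ ^ 2 : ℝ) : ℂ) * FT (⇑f) p)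
      ↔ a = 1 := by
  have hpoint : ∀ (f : SchwartzMap (Ed d) ℂ) (p : Ed d),
      (FT (fun x => legendreOp (⇑f) x + (a : ℂ) * ((1 - ‖x‖ ^ 2 : ℝ) : ℂ) * f x) p =
        legendreOp (FT (⇑f)) p + (a : ℂ) * ((1 - ‖p‖ ^ 2 : ℝ) : ℂ) * FT (⇑f) p)
      ↔ (FTS (Top a f)) p = (Top a (FTS f)) p := by
    intro f p
    rw [top_eq a f, FT_eq (Top a f), FT_eq f]
    rw [congrFun (top_eq a (FTS f)) p]
  constructor
  · intro H
    obtain ⟨g, p, hg2, hg1, hp⟩ := exists_bump hd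
    obtain ⟨f, hf⟩ := FTS_surj g
    have h0 := (hpoint f p).mp (H f p)
    rw [key a f, hf] at h0
    have h1 : (((a : ℂ) - 1) • ((∑ j, P j (P j g)) + ∑ i, X i (X i g))) p = 0 := by
      rw [SchwartzMap.add_apply] at h0
      linear_combination h0
    rw [SchwartzMap.smul_apply, SchwartzMap.add_apply, coe_sum, coe_sum] at h1
    have hP0 : (∑ j, (P j (P j g)) p) = 0 := by
      refine Finset.sum_eq_zero fun j _ => ?_
      rw [P_apply, ← pd_coe]
      exact hg2 j
    have hX : (∑ i, (X i (X i g)) p) = ((‖p‖ ^ 2 : ℝ) : ℂ) := by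
      rw [norm_sq_eq]
      push_cast
      refine Finset.sum_congr rfl fun i _ => ?_
      rw [X_apply, X_apply, hg1]
      ring
    rw [hP0, hX, zero_add, smul_eq_mul] at h1
    have hnz : ((‖p‖ ^ 2 : ℝ) : ℂ) ≠ 0 := by
      simp only [ne_eq, Complex.ofReal_eq_zero, pow_eq_zero_iff, norm_eq_zero]
      simpa using hp
    have h2 : (a : ℂ) - 1 = 0 := by
      rcases mul_eq_zero.mp h1 with h | h
      · exact h
      · exact absurd h hnz
    have : (a : ℂ) = 1 := by linear_combination h2
    exact_mod_cast this
  · intro ha f p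
    subst ha
    apply (hpoint f p).mpr
    rw [key 1 f]
    norm_num
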